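/- Let N ≥ 1, m > 0, θ ∈ (0, min{1, m}) and s ≥ 2. Let u : ℝ^N → (0,∞) be twice continuously differentiable and let ζ : ℝ^N → [0,∞) be continuously differentiable with compact support. Then ∫_{ℝ^N} ζ(x)^s |x|^s u(x)^{−θ} Δ(u^m)(x) dx ≥ −(m s² / 2θ) [ ∫_{ℝ^N} ζ(x)^{s−2} |x|^s u(x)^{m−θ} |∇ζ(x)|² dx + ∫_{ℝ^N} ζ(x)^s |x|^{s−2} u(x)^{m−θ} dx ]. -/

import Mathlib

open MeasureTheory Real RealInnerProductSpace

private lemma sq_rpow_half (t a : ℝ) (ht : 0 ≤ t) : (t ^ (a/2)) ^ 2 = t ^ a := by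
  rw [← Real.rpow_natCast (t ^ (a/2)) 2, ← Real.rpow_mul ht]
  norm_num

private lemma sq_rpow' (t a b : ℝ) (ht : 0 ≤ t) (h : 2*a = b) : (t ^ a) ^ 2 = t ^ b := by
  rw [← Real.rpow_natCast (t ^ a) 2, ← Real.rpow_mul ht]
  rw [mul_comm, ← h]; norm_num

private lemma rpow_add_pos (t a b c : ℝ) (ht : 0 < t) (h : a + b = c) : t ^ a * t ^ b = t ^ c := by
  rw [← Real.rpow_add ht, h]

private lemma rpow_add_nonneg (t a b c : ℝ) (ht : 0 ≤ t) (h : a + b = c) (hc : c ≠ 0) :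
    t ^ a * t ^ b = t ^ c := by
  rw [← Real.rpow_add' ht (h ▸ hc), h]

private lemma aux_young (m θ s X Y : ℝ) (hm : 0 < m) (hθ : 0 < θ) :
    m*s*(X*Y) ≤ θ*m/2*X^2 + m*s^2/(2*θ)*Y^2 := by
  have h : θ*m/2*X^2 + m*s^2/(2*θ)*Y^2 - m*s*(X*Y) = (m/(2*θ)) * (θ*X - s*Y)^2 := by
    field_simp
    ring
  nlinarith [mul_nonneg (div_nonneg hm.le (by linarith : (0:ℝ) ≤ 2*θ)) (sq_nonneg (θ*X - s*Y))]

private lemma pointwise_real (m θ s p r v G1 G2 t1 t2 : ℝ) (hm : 0 < m) (hθ : 0 < θ) (hs : 2 ≤ s)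
    (hp : 0 ≤ p) (hr : 0 ≤ r) (hv : 0 < v)
    (h1 : t1 ≤ G1*G2) (h2 : t2 ≤ r*G2) :
    -(m*s^2/(2*θ)) * (p^(s-2)*r^s*v^(m-θ)*G1^2 + p^s*r^(s-2)*v^(m-θ))
      ≤ θ*m*(p^s*r^s*v^(m-θ-2))*G2^2
        - m*s*v^(m-θ-1)*(r^s*p^(s-1)*t1 + p^s*r^(s-2)*t2) := by
  have hv' := hv.le
  have hs0 : s ≠ 0 := by intro h; rw [h] at hs; norm_num at hs
  have hs1 : s - 1 ≠ 0 := by intro h; nlinarith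
  set X := p^(s/2)*r^(s/2)*v^((m-θ-2)/2)*G2 with hX
  set Y := p^(s/2-1)*r^(s/2)*v^((m-θ)/2)*G1 with hY
  set Y' := p^(s/2)*r^(s/2-1)*v^((m-θ)/2) with hY'
  have ep1 : p^(s/2)*p^(s/2-1) = p^(s-1) := rpow_add_nonneg _ _ _ _ hp (by ring) hs1
  have ep2 : p^(s/2)*p^(s/2) = p^s := rpow_add_nonneg _ _ _ _ hp (by ring) hs0
  have ep3 : (p^(s/2-1))^2 = p^(s-2) := sq_rpow' _ _ _ hp (by ring)
  have er1 : r^(s/2)*r^(s/2-1) = r^(s-1) := rpow_add_nonneg _ _ _ _ hr (by ring) hs1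
  have er2 : r^(s/2)*r^(s/2) = r^s := rpow_add_nonneg _ _ _ _ hr (by ring) hs0
  have er3 : (r^(s/2-1))^2 = r^(s-2) := sq_rpow' _ _ _ hr (by ring)
  have er4 : r^(s-2)*r = r^(s-1) := by
    nth_rewrite 2 [← Real.rpow_one r]
    exact rpow_add_nonneg _ _ _ _ hr (by ring) hs1
  have ev1 : v^((m-θ-2)/2)*v^((m-θ)/2) = v^(m-θ-1) := rpow_add_pos _ _ _ _ hv (by ring)
  have ev2 : v^((m-θ)/2)*v^((m-θ)/2) = v^(m-θ) := rpow_add_pos _ _ _ _ hv (by ring)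
  have I1 : p^s*r^s*v^(m-θ-2)*G2^2 = X^2 := by
    rw [hX, mul_pow, mul_pow, mul_pow,
      sq_rpow_half p s hp, sq_rpow_half r s hr, sq_rpow_half v _ hv']
  have I2 : p^(s-1)*r^s*v^(m-θ-1)*(G1*G2) = X*Y := by
    rw [hX, hY, ← ep1, ← er2, ← ev1]; ring
  have I3 : p^s*r^(s-1)*v^(m-θ-1)*G2 = X*Y' := by
    rw [hX, hY', ← ep2, ← er1, ← ev1]; ring
  have I4 : p^(s-2)*r^s*v^(m-θ)*G1^2 = Y^2 := by
    rw [hY, ← ep3, ← er2, ← ev2]; ring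
  have I5 : p^s*r^(s-2)*v^(m-θ) = Y'^2 := by
    rw [hY', ← ep2, ← er3, ← ev2]; ring
  have hb1 : m*s*v^(m-θ-1)*(r^s*p^(s-1)*t1) ≤ m*s*(X*Y) := by
    rw [← I2]
    calc m*s*v^(m-θ-1)*(r^s*p^(s-1)*t1) ≤ m*s*v^(m-θ-1)*(r^s*p^(s-1)*(G1*G2)) := by
          apply mul_le_mul_of_nonneg_left _ (by positivity)
          exact mul_le_mul_of_nonneg_left h1 (by positivity)
      _ = m*s*(p^(s-1)*r^s*v^(m-θ-1)*(G1*G2)) := by ring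
  have hb2 : m*s*v^(m-θ-1)*(p^s*r^(s-2)*t2) ≤ m*s*(X*Y') := by
    rw [← I3]
    calc m*s*v^(m-θ-1)*(p^s*r^(s-2)*t2) ≤ m*s*v^(m-θ-1)*(p^s*(r^(s-2)*(r*G2))) := by
          apply mul_le_mul_of_nonneg_left _ (by positivity)
          rw [mul_assoc]
          exact mul_le_mul_of_nonneg_left
            (mul_le_mul_of_nonneg_left h2 (by positivity)) (by positivity)
      _ = m*s*v^(m-θ-1)*(p^s*((r^(s-2)*r)*G2)) := by ring
      _ = m*s*(p^s*r^(s-1)*v^(m-θ-1)*G2) := by rw [er4]; ring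
  have hy1 := aux_young m θ s X Y hm hθ
  have hy2 := aux_young m θ s X Y' hm hθ
  rw [show θ*m*(p^s*r^s*v^(m-θ-2))*G2^2 = θ*m*(p^s*r^s*v^(m-θ-2)*G2^2) by ring, I1, I4, I5]
  have expand : m*s*v^(m-θ-1)*(r^s*p^(s-1)*t1 + p^s*r^(s-2)*t2)
      = m*s*v^(m-θ-1)*(r^s*p^(s-1)*t1) + m*s*v^(m-θ-1)*(p^s*r^(s-2)*t2) := by ring
  rw [expand]
  linarith [hb1, hb2, hy1, hy2]

private lemma grad_apply {N : ℕ} (f : EuclideanSpace ℝ (Fin N) → ℝ)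
    (x v : EuclideanSpace ℝ (Fin N)) : fderiv ℝ f x v = ⟪gradient f x, v⟫ := by
  rw [gradient, InnerProductSpace.toDual_symm_apply]

private lemma grad_coord {N : ℕ} (f : EuclideanSpace ℝ (Fin N) → ℝ)
    (x : EuclideanSpace ℝ (Fin N)) (i : Fin N) :
    fderiv ℝ f x (EuclideanSpace.single i 1) = gradient f x i := by
  rw [grad_apply, EuclideanSpace.inner_single_right]
  simp

private lemma sum_coords {N : ℕ} (A B : EuclideanSpace ℝ (Fin N)) :
    ∑ i, A i * B i = ⟪A, B⟫ := by
  simp [PiLp.inner_apply, RCLike.inner_apply]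
  exact Finset.sum_congr rfl fun i _ => mul_comm _ _

private lemma sum_coords_sq {N : ℕ} (A : EuclideanSpace ℝ (Fin N)) :
    ∑ i, (A i)^2 = ‖A‖^2 := by
  rw [← real_inner_self_eq_norm_sq, ← sum_coords]
  exact Finset.sum_congr rfl (fun i _ => sq (A i) ▸ by ring)

/-- The Laplacian of a real-valued function on `ℝ^N`, as the sum of the second
partial derivatives in the coordinate directions. -/
noncomputable def laplacian {N : ℕ} (f : EuclideanSpace ℝ (Fin N) → ℝ)
    (x : EuclideanSpace ℝ (Fin N)) : ℝ :=
  ∑ i : Fin N, fderiv ℝ (fun y => fderiv ℝ f y (EuclideanSpace.single i 1)) x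
    (EuclideanSpace.single i 1)

/-- Lower bound for the diffusion term tested against `ζ^s |x|^s u^{-θ}`:
`∫ ζ^s |x|^s u^{-θ} Δ(u^m)
  ≥ -(m s²/2θ) [∫ ζ^{s-2} |x|^s u^{m-θ} |∇ζ|² + ∫ ζ^s |x|^{s-2} u^{m-θ}]`. -/
theorem diffusion_term_lower_bound
    (N : ℕ) (hN : 1 ≤ N) (m θ s : ℝ) (hm : 0 < m)
    (hθ : θ ∈ Set.Ioo (0 : ℝ) (min 1 m)) (hs : 2 ≤ s)
    (u : EuclideanSpace ℝ (Fin N) → ℝ)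
    (hu : ContDiff ℝ 2 u) (hupos : ∀ x, 0 < u x)
    (ζ : EuclideanSpace ℝ (Fin N) → ℝ)
    (hζ : ContDiff ℝ 1 ζ) (hζsupp : HasCompactSupport ζ) (hζ0 : ∀ x, 0 ≤ ζ x) :
    -(m * s ^ 2 / (2 * θ)) *
        ((∫ x, ζ x ^ (s - 2) * ‖x‖ ^ s * u x ^ (m - θ) * ‖gradient ζ x‖ ^ 2) +
          ∫ x, ζ x ^ s * ‖x‖ ^ (s - 2) * u x ^ (m - θ)) ≤
      ∫ x, ζ x ^ s * ‖x‖ ^ s * u x ^ (-θ) * laplacian (fun y => u y ^ m) x := by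
  obtain ⟨hθ0, hθmin⟩ := hθ
  have hs0 : (0:ℝ) < s := by linarith
  have hs1 : (1:ℝ) ≤ s := by linarith
  have hs1' : s - 1 ≠ 0 := by intro h; linarith [h]
  have hs2 : (0:ℝ) ≤ s - 2 := by linarith
  have hu1 : Differentiable ℝ u := hu.differentiable (by norm_num)
  have hζ1 : Differentiable ℝ ζ := hζ.differentiable (by norm_num)
  set W : EuclideanSpace ℝ (Fin N) → ℝ := fun x => ζ x ^ s * ‖x‖ ^ s * u x ^ (-θ) with hWdef
  set g : Fin N → EuclideanSpace ℝ (Fin N) → ℝ :=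
    fun i x => fderiv ℝ (fun y => u y ^ m) x (EuclideanSpace.single i 1) with hgdef
  -- smoothness of u^m
  have hM2 : ContDiff ℝ 2 (fun y => u y ^ m) := by
    rw [contDiff_iff_contDiffAt]
    exact fun x => hu.contDiffAt.rpow_const_of_ne (hupos x).ne'
  have hgC : ∀ i, ContDiff ℝ 1 (g i) := by
    intro i
    rw [hgdef]
    have h1 : ContDiff ℝ 1 (fderiv ℝ (fun y => u y ^ m)) :=
      hM2.fderiv_right (n := 2) (by norm_num)
    exact (ContinuousLinearMap.apply ℝ ℝ (EuclideanSpace.single i 1)).contDiff.comp h1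
  -- derivative of u^m
  have hMD : ∀ x, HasFDerivAt (fun y => u y ^ m) ((m * u x ^ (m-1)) • fderiv ℝ u x) x :=
    fun x => (Real.hasDerivAt_rpow_const (Or.inl (hupos x).ne')).comp_hasFDerivAt x
      (hu1 x).hasFDerivAt
  have hgf : ∀ i x, g i x = m * u x ^ (m-1) * fderiv ℝ u x (EuclideanSpace.single i 1) := by
    intro i x
    simp only [hgdef, (hMD x).fderiv]
    simp [mul_assoc]
  -- derivative of W
  have hWD : ∀ x, HasFDerivAt W
      ((ζ x ^ s * ‖x‖ ^ s) • ((-θ * u x ^ (-θ-1)) • fderiv ℝ u x)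
        + u x ^ (-θ) • ((ζ x ^ s) • ((s * ‖x‖ ^ (s-2)) • (innerSL ℝ x))
          + (‖x‖ ^ s) • ((s * ζ x ^ (s-1)) • fderiv ℝ ζ x))) x := by
    intro x
    have hZ : HasFDerivAt (fun y => ζ y ^ s) ((s * ζ x ^ (s-1)) • fderiv ℝ ζ x) x :=
      (Real.hasDerivAt_rpow_const (Or.inr hs1)).comp_hasFDerivAt x (hζ1 x).hasFDerivAt
    have hR : HasFDerivAt (fun y : EuclideanSpace ℝ (Fin N) => ‖y‖ ^ s)
        ((s * ‖x‖ ^ (s-2)) • innerSL ℝ x) x := hasFDerivAt_norm_rpow x (by linarith)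
    have hU : HasFDerivAt (fun y => u y ^ (-θ)) ((-θ * u x ^ (-θ-1)) • fderiv ℝ u x) x :=
      (Real.hasDerivAt_rpow_const (Or.inl (hupos x).ne')).comp_hasFDerivAt x (hu1 x).hasFDerivAt
    exact (hZ.mul hR).mul hU
  have hWdiff : Differentiable ℝ W := fun x => (hWD x).differentiableAt
  -- scalar formula for the derivative of W
  have hWD' : ∀ i x, fderiv ℝ W x (EuclideanSpace.single i 1)
      = ζ x ^ s * ‖x‖ ^ s * (-θ * u x ^ (-θ-1) * fderiv ℝ u x (EuclideanSpace.single i 1))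
        + u x ^ (-θ) * (ζ x ^ s * (s * ‖x‖ ^ (s-2) * x i)
          + ‖x‖ ^ s * (s * ζ x ^ (s-1) * fderiv ℝ ζ x (EuclideanSpace.single i 1))) := by
    intro i x
    rw [(hWD x).fderiv]
    have hinner : (innerSL ℝ x) (EuclideanSpace.single i 1) = x i := by
      simp [EuclideanSpace.inner_single_right]
    simp [ContinuousLinearMap.add_apply, ContinuousLinearMap.smul_apply, hinner]
    ring
  -- continuity toolkit
  have cζp : ∀ c : ℝ, 0 ≤ c → Continuous fun x => ζ x ^ c :=
    fun c hc => hζ.continuous.rpow_const (fun x => Or.inr hc)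
  have cnp : ∀ c : ℝ, 0 ≤ c → Continuous fun x : EuclideanSpace ℝ (Fin N) => ‖x‖ ^ c :=
    fun c hc => continuous_norm.rpow_const (fun x => Or.inr hc)
  have cup : ∀ c : ℝ, Continuous fun x => u x ^ c :=
    fun c => hu.continuous.rpow_const (fun x => Or.inl (hupos x).ne')
  have cdu : ∀ i, Continuous fun x => fderiv ℝ u x (EuclideanSpace.single i 1) :=
    fun i => (ContinuousLinearMap.apply ℝ ℝ (EuclideanSpace.single i 1)).continuous.comp
      (hu.continuous_fderiv (by norm_num))
  have cdζ : ∀ i, Continuous fun x => fderiv ℝ ζ x (EuclideanSpace.single i 1) :=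
    fun i => (ContinuousLinearMap.apply ℝ ℝ (EuclideanSpace.single i 1)).continuous.comp
      (hζ.continuous_fderiv (by norm_num))
  have cg : ∀ i, Continuous (g i) := fun i => (hgC i).continuous
  have cdg : ∀ i, Continuous fun x => fderiv ℝ (g i) x (EuclideanSpace.single i 1) :=
    fun i => (ContinuousLinearMap.apply ℝ ℝ (EuclideanSpace.single i 1)).continuous.comp
      ((hgC i).continuous_fderiv (by norm_num))
  have cW : Continuous W := by
    rw [hWdef]; exact ((cζp s hs0.le).mul (cnp s hs0.le)).mul (cup (-θ))
  have cW' : ∀ i, Continuous fun x => fderiv ℝ W x (EuclideanSpace.single i 1) := by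
    intro i
    have : (fun x => fderiv ℝ W x (EuclideanSpace.single i 1))
        = fun x => ζ x ^ s * ‖x‖ ^ s * (-θ * u x ^ (-θ-1)
            * fderiv ℝ u x (EuclideanSpace.single i 1))
          + u x ^ (-θ) * (ζ x ^ s * (s * ‖x‖ ^ (s-2) * x i)
            + ‖x‖ ^ s * (s * ζ x ^ (s-1) * fderiv ℝ ζ x (EuclideanSpace.single i 1))) :=
      funext (hWD' i)
    rw [this]
    exact (((cζp s hs0.le).mul (cnp s hs0.le)).mul
        ((continuous_const.mul (cup (-θ-1))).mul (cdu i))).add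
      ((cup (-θ)).mul (((cζp s hs0.le).mul
          ((continuous_const.mul (cnp (s-2) hs2)).mul ((continuous_apply i).comp (PiLp.continuous_ofLp 2 _)))).add
        ((cnp s hs0.le).mul ((continuous_const.mul (cζp (s-1) (by linarith))).mul (cdζ i)))))
  -- integrability toolkit
  have mkInt : ∀ f : EuclideanSpace ℝ (Fin N) → ℝ,
      Continuous f → (∀ x, ζ x = 0 → f x = 0) → Integrable f := by
    intro f hc h0
    apply hc.integrable_of_hasCompactSupport
    apply hζsupp.mono'
    intro x hx
    by_contra hxx
    exact hx (h0 x (image_eq_zero_of_notMem_tsupport hxx))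
  have mkInt2 : ∀ f : EuclideanSpace ℝ (Fin N) → ℝ,
      Continuous f → (∀ x, fderiv ℝ ζ x = 0 → f x = 0) → Integrable f := by
    intro f hc h0
    apply hc.integrable_of_hasCompactSupport
    apply (hζsupp.fderiv (𝕜 := ℝ)).mono'
    intro x hx
    by_contra hxx
    exact hx (h0 x (image_eq_zero_of_notMem_tsupport hxx))
  have hζvanish : ∀ x, ζ x = 0 → W x = 0 := by
    intro x hx
    rw [hWdef]
    simp only [hx, Real.zero_rpow hs0.ne', zero_mul]
  have int1 : ∀ i, Integrable fun x => fderiv ℝ W x (EuclideanSpace.single i 1) * g i x := by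
    intro i
    apply mkInt _ ((cW' i).mul (cg i))
    intro x hx
    rw [Pi.mul_apply, hWD' i x, hx, Real.zero_rpow hs0.ne', Real.zero_rpow hs1']
    ring
  have int2 : ∀ i, Integrable fun x => W x * fderiv ℝ (g i) x (EuclideanSpace.single i 1) := by
    intro i
    apply mkInt _ (cW.mul (cdg i))
    intro x hx
    rw [Pi.mul_apply, hζvanish x hx, zero_mul]
  have int3 : ∀ i, Integrable fun x => W x * g i x := by
    intro i
    apply mkInt _ (cW.mul (cg i))
    intro x hx
    rw [Pi.mul_apply, hζvanish x hx, zero_mul]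
  -- integration by parts
  have IBP : ∀ i, ∫ x, W x * fderiv ℝ (g i) x (EuclideanSpace.single i 1)
      = - ∫ x, fderiv ℝ W x (EuclideanSpace.single i 1) * g i x := fun i =>
    integral_mul_fderiv_eq_neg_fderiv_mul_of_integrable (int1 i) (int2 i) (int3 i)
      (fun x _ => hWdiff x) (fun x _ => (hgC i).differentiable (by norm_num) x)
  -- pointwise inequality
  have pointwise : ∀ x, -(m * s ^ 2 / (2 * θ)) *
        (ζ x ^ (s - 2) * ‖x‖ ^ s * u x ^ (m - θ) * ‖gradient ζ x‖ ^ 2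
          + ζ x ^ s * ‖x‖ ^ (s - 2) * u x ^ (m - θ))
      ≤ - ∑ i, fderiv ℝ W x (EuclideanSpace.single i 1) * g i x := by
    intro x
    have merge1 : u x ^ (-θ-1) * u x ^ (m-1) = u x ^ (m-θ-2) :=
      rpow_add_pos _ _ _ _ (hupos x) (by ring)
    have merge2 : u x ^ (-θ) * u x ^ (m-1) = u x ^ (m-θ-1) :=
      rpow_add_pos _ _ _ _ (hupos x) (by ring)
    have hsum : ∑ i, fderiv ℝ W x (EuclideanSpace.single i 1) * g i x
        = (-(θ*m)*(ζ x ^ s * ‖x‖ ^ s)*(u x ^ (-θ-1) * u x ^ (m-1)))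
            * (∑ i, (fderiv ℝ u x (EuclideanSpace.single i 1))^2)
          + (m*s*(ζ x ^ s * ‖x‖ ^ (s-2))*(u x ^ (-θ) * u x ^ (m-1)))
            * (∑ i, x i * fderiv ℝ u x (EuclideanSpace.single i 1))
          + (m*s*(‖x‖ ^ s * ζ x ^ (s-1))*(u x ^ (-θ) * u x ^ (m-1)))
            * (∑ i, fderiv ℝ ζ x (EuclideanSpace.single i 1)
                * fderiv ℝ u x (EuclideanSpace.single i 1)) := by
      rw [Finset.mul_sum, Finset.mul_sum, Finset.mul_sum, ← Finset.sum_add_distrib,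
        ← Finset.sum_add_distrib]
      refine Finset.sum_congr rfl (fun i _ => ?_)
      rw [hWD' i x, hgf i x]
      ring
    have c1 : ∑ i, (fderiv ℝ u x (EuclideanSpace.single i 1))^2 = ‖gradient u x‖^2 := by
      simp_rw [grad_coord u x]; exact sum_coords_sq _
    have c2 : ∑ i, x i * fderiv ℝ u x (EuclideanSpace.single i 1) = ⟪x, gradient u x⟫ := by
      simp_rw [grad_coord u x]; exact sum_coords _ _
    have c3 : ∑ i, fderiv ℝ ζ x (EuclideanSpace.single i 1)
        * fderiv ℝ u x (EuclideanSpace.single i 1) = ⟪gradient ζ x, gradient u x⟫ := by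
      simp_rw [grad_coord]; exact sum_coords _ _
    rw [hsum, c1, c2, c3, merge1, merge2]
    have key := pointwise_real m θ s (ζ x) ‖x‖ (u x) ‖gradient ζ x‖ ‖gradient u x‖
      ⟪gradient ζ x, gradient u x⟫ ⟪x, gradient u x⟫ hm hθ0 hs (hζ0 x) (norm_nonneg x)
      (hupos x) (real_inner_le_norm _ _) (real_inner_le_norm _ _)
    linarith [key]
  -- integrability of the right-hand side integrands
  have cgrad : Continuous fun x => gradient ζ x := by
    unfold gradient
    exact (LinearIsometryEquiv.continuous _).comp (hζ.continuous_fderiv (by norm_num))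
  have intA : Integrable (fun x => ζ x ^ (s - 2) * ‖x‖ ^ s * u x ^ (m - θ)
      * ‖gradient ζ x‖ ^ 2) := by
    apply mkInt2
    · exact (((cζp (s-2) hs2).mul (cnp s hs0.le)).mul (cup (m-θ))).mul (cgrad.norm.pow 2)
    · intro x hx
      have hg0 : gradient ζ x = 0 := by unfold gradient; rw [hx]; simp
      rw [hg0]; simp
  have intB : Integrable (fun x => ζ x ^ s * ‖x‖ ^ (s - 2) * u x ^ (m - θ)) := by
    apply mkInt
    · exact ((cζp s hs0.le).mul (cnp (s-2) hs2)).mul (cup (m-θ))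
    · intro x hx
      rw [hx, Real.zero_rpow hs0.ne']; ring
  have intS : Integrable (fun x =>
      - ∑ i, fderiv ℝ W x (EuclideanSpace.single i 1) * g i x) :=
    (integrable_finset_sum _ (fun i _ => int1 i)).neg
  -- laplacian expansion
  have lapW : ∀ x, W x * laplacian (fun y => u y ^ m) x
      = ∑ i, W x * fderiv ℝ (g i) x (EuclideanSpace.single i 1) := by
    intro x
    unfold laplacian
    rw [Finset.mul_sum]
  have main : -(m * s ^ 2 / (2 * θ)) *
        ((∫ x, ζ x ^ (s - 2) * ‖x‖ ^ s * u x ^ (m - θ) * ‖gradient ζ x‖ ^ 2) +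
          ∫ x, ζ x ^ s * ‖x‖ ^ (s - 2) * u x ^ (m - θ))
      ≤ ∫ x, W x * laplacian (fun y => u y ^ m) x := by
    calc -(m * s ^ 2 / (2 * θ)) *
          ((∫ x, ζ x ^ (s - 2) * ‖x‖ ^ s * u x ^ (m - θ) * ‖gradient ζ x‖ ^ 2) +
            ∫ x, ζ x ^ s * ‖x‖ ^ (s - 2) * u x ^ (m - θ))
        = ∫ x, -(m * s ^ 2 / (2 * θ)) *
            (ζ x ^ (s - 2) * ‖x‖ ^ s * u x ^ (m - θ) * ‖gradient ζ x‖ ^ 2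
              + ζ x ^ s * ‖x‖ ^ (s - 2) * u x ^ (m - θ)) := by
          rw [integral_const_mul, integral_add intA intB]
      _ ≤ ∫ x, - ∑ i, fderiv ℝ W x (EuclideanSpace.single i 1) * g i x :=
          integral_mono ((intA.add intB).const_mul _) intS pointwise
      _ = - ∑ i, ∫ x, fderiv ℝ W x (EuclideanSpace.single i 1) * g i x := by
          rw [integral_neg, integral_finset_sum _ (fun i _ => int1 i)]
      _ = ∑ i, ∫ x, W x * fderiv ℝ (g i) x (EuclideanSpace.single i 1) := by
          rw [show (∑ i, ∫ x, W x * fderiv ℝ (g i) x (EuclideanSpace.single i 1))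
              = ∑ i, -(∫ x, fderiv ℝ W x (EuclideanSpace.single i 1) * g i x)
            from Finset.sum_congr rfl (fun i _ => IBP i)]
          rw [Finset.sum_neg_distrib]
      _ = ∫ x, W x * laplacian (fun y => u y ^ m) x := by
          rw [← integral_finset_sum _ (fun i _ => int2 i)]
          congr 1
          funext x
          exact (lapW x).symm
  simp only [hWdef] at main
  exact main
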